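/- For every single-qubit unitary V ∈ U(2) there exists a real phase φ such that all matrix elements e^{iφ}⟨Φ_i|(I₂⊗V)|Φ_j⟩, i, j ∈ {0,1,2,3}, are real; likewise there exists a real phase φ' such that all matrix elements e^{iφ'}⟨Φ_i|(V⊗I₂)|Φ_j⟩ are real. That is, every product unitary of the form I⊗V or V⊗I is, up to an overall phase, a real matrix in the magic basis. -/

import Mathlib

open Matrix Complex
open scoped Matrix Kronecker

noncomputable section

def ketv (i j : Fin 2) : Fin 2 × Fin 2 → ℂ := fun x => if x = (i, j) then 1 else 0

/-- The magic basis of ℂ²⊗ℂ². -/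
def magic : Fin 4 → (Fin 2 × Fin 2 → ℂ) :=
  ![(Real.sqrt 2 : ℂ)⁻¹ • (ketv 0 0 + ketv 1 1),
    (-I) • ((Real.sqrt 2 : ℂ)⁻¹ • (ketv 0 0 - ketv 1 1)),
    (-I) • ((Real.sqrt 2 : ℂ)⁻¹ • (ketv 0 1 + ketv 1 0)),
    (Real.sqrt 2 : ℂ)⁻¹ • (ketv 0 1 - ketv 1 0)]

def s2 : ℂ := (Real.sqrt 2 : ℂ)⁻¹
lemma mg0 : magic 0 = fun x => if x = (0,0) then s2 else if x = (1,1) then s2 else 0 := by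
  funext ⟨a,b⟩; fin_cases a <;> fin_cases b <;> simp [magic, ketv, s2, Prod.ext_iff]
lemma mg1 : magic 1 = fun x => if x = (0,0) then -I*s2 else if x = (1,1) then I*s2 else 0 := by
  funext ⟨a,b⟩; fin_cases a <;> fin_cases b <;> simp [magic, ketv, s2, Prod.ext_iff] <;> ring
lemma mg2 : magic 2 = fun x => if x = (0,1) then -I*s2 else if x = (1,0) then -I*s2 else 0 := by
  funext ⟨a,b⟩; fin_cases a <;> fin_cases b <;> simp [magic, ketv, s2, Prod.ext_iff] <;> ring
lemma mg3 : magic 3 = fun x => if x = (0,1) then s2 else if x = (1,0) then -s2 else 0 := by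
  funext ⟨a,b⟩; fin_cases a <;> fin_cases b <;> simp [magic, ketv, s2, Prod.ext_iff] <;>
    simp [Matrix.vecHead, Matrix.vecTail]

lemma s2conj : starRingEnd ℂ s2 = s2 := by
  simp [s2, map_inv₀, Complex.conj_ofReal]

lemma s2sq : s2 * s2 = 2⁻¹ := by
  rw [s2, ← mul_inv]
  norm_num [← Complex.ofReal_mul, Real.mul_self_sqrt]

set_option maxHeartbeats 2000000 in
lemma key (V : Matrix (Fin 2) (Fin 2) ℂ) (d : ℂ) (hd : d ≠ 0)
    (h00 : starRingEnd ℂ (V 0 0) = V 1 1 * d⁻¹)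
    (h01 : starRingEnd ℂ (V 0 1) = -V 1 0 * d⁻¹)
    (h10 : starRingEnd ℂ (V 1 0) = -V 0 1 * d⁻¹)
    (h11 : starRingEnd ℂ (V 1 1) = V 0 0 * d⁻¹) (i j : Fin 4) :
    starRingEnd ℂ (star (magic i) ⬝ᵥ ((1 : Matrix (Fin 2) (Fin 2) ℂ) ⊗ₖ V).mulVec (magic j)) * d
      = star (magic i) ⬝ᵥ ((1 : Matrix (Fin 2) (Fin 2) ℂ) ⊗ₖ V).mulVec (magic j) ∧
    starRingEnd ℂ (star (magic i) ⬝ᵥ (V ⊗ₖ (1 : Matrix (Fin 2) (Fin 2) ℂ)).mulVec (magic j)) * d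
      = star (magic i) ⬝ᵥ (V ⊗ₖ (1 : Matrix (Fin 2) (Fin 2) ℂ)).mulVec (magic j) := by
  have h4 : ∀ k : Fin 4, k = 0 ∨ k = 1 ∨ k = 2 ∨ k = 3 := by decide
  rcases h4 i with rfl | rfl | rfl | rfl <;> rcases h4 j with rfl | rfl | rfl | rfl <;>
    constructor <;>
    · simp only [mg0, mg1, mg2, mg3, dotProduct, mulVec, Fintype.sum_prod_type, Fin.sum_univ_two,
        kroneckerMap_apply, Pi.star_apply, Complex.star_def]
      norm_num [Matrix.one_apply, Prod.ext_iff]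
      simp only [RingHom.map_mul, map_add, map_sub, map_neg, map_zero, RingHom.map_one, s2conj,
        Complex.conj_I, h00, h01, h10, h11]
      field_simp
      ring


/-- Every product unitary of the form I⊗V or V⊗I is, up to an overall phase, a real
matrix in the magic basis. -/
theorem product_unitary_real_in_magic_basis (V : Matrix (Fin 2) (Fin 2) ℂ)
    (hV : V ∈ Matrix.unitaryGroup (Fin 2) ℂ) :
    (∃ φ : ℝ, ∀ i j : Fin 4,
      (Complex.exp (I * φ) *
        (star (magic i) ⬝ᵥ ((1 : Matrix (Fin 2) (Fin 2) ℂ) ⊗ₖ V).mulVec (magic j))).im = 0) ∧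
    (∃ φ' : ℝ, ∀ i j : Fin 4,
      (Complex.exp (I * φ') *
        (star (magic i) ⬝ᵥ (V ⊗ₖ (1 : Matrix (Fin 2) (Fin 2) ℂ)).mulVec (magic j))).im = 0) := by
  set d := V.det with hdet
  have hud : d ∈ unitary ℂ := Matrix.det_of_mem_unitary hV
  have hsd : starRingEnd ℂ d * d = 1 := hud.1
  have hns : Complex.normSq d = 1 := by
    have := congrArg Complex.re hsd
    simpa [Complex.normSq_eq_conj_mul_self, Complex.normSq_apply] using
      (by exact_mod_cast congrArg Complex.re hsd.symm : (1:ℝ) = (starRingEnd ℂ d * d).re).symm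
  have habs : ‖d‖ = 1 := by
    rw [Complex.norm_def, hns, Real.sqrt_one]
  have hd : d ≠ 0 := by
    intro h; rw [h] at habs; simp at habs
  -- conjugate entry relations
  have hVinv : V⁻¹ = star V := Matrix.inv_eq_right_inv hV.2
  have hA : star V = d⁻¹ • !![V 1 1, -(V 0 1); -(V 1 0), V 0 0] := by
    rw [← hVinv, Matrix.inv_def, Ring.inverse_eq_inv', ← hdet]
    congr 1
    rw [Matrix.eta_fin_two V, Matrix.adjugate_fin_two]
    try simp
  have happ : ∀ a b : Fin 2, starRingEnd ℂ (V a b) =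
      d⁻¹ * !![V 1 1, -(V 0 1); -(V 1 0), V 0 0] b a := by
    intro a b
    have := congrFun (congrFun hA b) a
    simpa [Matrix.star_apply, Complex.star_def, Matrix.smul_apply, smul_eq_mul] using this
  have h00 : starRingEnd ℂ (V 0 0) = V 1 1 * d⁻¹ := by
    rw [happ 0 0]; simp [mul_comm]
  have h01 : starRingEnd ℂ (V 0 1) = -V 1 0 * d⁻¹ := by
    rw [happ 0 1]; simp; try ring
  have h10 : starRingEnd ℂ (V 1 0) = -V 0 1 * d⁻¹ := by
    rw [happ 1 0]; simp; try ring
  have h11 : starRingEnd ℂ (V 1 1) = V 0 0 * d⁻¹ := by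
    rw [happ 1 1]; simp [mul_comm]
  -- the phase
  set φ : ℝ := -(d.arg) / 2 with hφ
  have hc : starRingEnd ℂ (Complex.exp (I * φ)) = Complex.exp (I * φ) * d := by
    rw [← Complex.exp_conj]
    have hdeq : d = Complex.exp (d.arg * I) := by
      conv_lhs => rw [← Complex.norm_mul_exp_arg_mul_I d]
      rw [habs]; simp
    rw [hdeq, ← Complex.exp_add]
    congr 1
    simp only [_root_.map_mul, Complex.conj_I, Complex.conj_ofReal, hφ]
    push_cast
    ring
  have main : ∀ (M : ℂ), starRingEnd ℂ M * d = M → (Complex.exp (I * φ) * M).im = 0 := by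
    intro M hM
    rw [← Complex.conj_eq_iff_im]
    rw [_root_.map_mul, hc]
    rw [mul_assoc, mul_comm d (starRingEnd ℂ M), hM]
  exact ⟨⟨φ, fun i j => main _ (key V d hd h00 h01 h10 h11 i j).1⟩,
         ⟨φ, fun i j => main _ (key V d hd h00 h01 h10 h11 i j).2⟩⟩

end
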